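/- If H is a closed conformal Killing-Yano tensor of order p, satisfying ∇_a H_{b₁…b_p} = 2 g_{a[b₁} h_{b₂…b_p]}, and t is an affinely parameterized geodesic vector field, then the antisymmetric tensor P̂_{b c₁…c_p} = t_{[b} H_{c₁…c_p]} satisfies t^a ∇_a P̂_{b c₁…c_p} = 0, i.e. it is conserved along the geodesics tangent to t. -/
import Mathlib


open Finset

/-- The sign of a permutation, as a real number. -/
noncomputable def esign {p : ℕ} (σ : Equiv.Perm (Fin p)) : ℝ :=
  ((Equiv.Perm.sign σ : ℤ) : ℝ)

/-- A rank-`p` tensor (in components) is totally antisymmetric. -/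
def IsAlt {ι : Type*} {p : ℕ} (T : (Fin p → ι) → ℝ) : Prop :=
  ∀ (σ : Equiv.Perm (Fin p)) (v : Fin p → ι), T (v ∘ σ) = esign σ * T v

/-- Antisymmetrization of a rank-`p` tensor (with the `1/p!` factor). -/
noncomputable def alt {ι : Type*} {p : ℕ} (T : (Fin p → ι) → ℝ) : (Fin p → ι) → ℝ :=
  fun v => (Nat.factorial p : ℝ)⁻¹ * ∑ σ : Equiv.Perm (Fin p), esign σ * T (v ∘ σ)

/-- The tensor `g_{a[b₁} h_{b₂…b_{q+1}]}` :
antisymmetrization over the last `q+1` indices of `g_{a b₁} h_{b₂…b_{q+1}}`. -/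
noncomputable def ghAlt {ι : Type*} {q : ℕ} (g : ι → ι → ℝ) (h : (Fin q → ι) → ℝ)
    (a : ι) : (Fin (q + 1) → ι) → ℝ :=
  alt fun v => g a (v 0) * h fun i => v i.succ

/-- View a "derivative" `D : ι → ((Fin p → ι) → ℝ)` as a rank-`(p+1)` tensor. -/
def totalD {ι : Type*} {p : ℕ} (D : ι → (Fin p → ι) → ℝ) : (Fin (p + 1) → ι) → ℝ :=
  fun w => D (w 0) fun i => w i.succ

lemma esign_mul {p : ℕ} (σ τ : Equiv.Perm (Fin p)) : esign (σ * τ) = esign σ * esign τ := by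
  simp [esign, map_mul]

lemma esign_sq {p : ℕ} (τ : Equiv.Perm (Fin p)) : esign τ * esign τ = 1 := by
  rcases Int.units_eq_one_or (Equiv.Perm.sign τ) with h | h <;> simp [esign, h]

lemma sum_mul_alt {ι : Type*} {p : ℕ} {α : Type*} [Fintype α]
    (c : α → ℝ) (F : α → (Fin p → ι) → ℝ) (w : Fin p → ι) :
    ∑ a, c a * alt (F a) w = alt (fun v => ∑ a, c a * F a v) w := by
  unfold alt
  show ∑ a, c a * ((Nat.factorial p : ℝ)⁻¹ * ∑ σ : Equiv.Perm (Fin p), esign σ * F a (w ∘ σ))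
    = (Nat.factorial p : ℝ)⁻¹ * ∑ σ : Equiv.Perm (Fin p), esign σ * ∑ a, c a * F a (w ∘ σ)
  simp only [Finset.mul_sum]
  rw [Finset.sum_comm]
  exact Finset.sum_congr rfl fun σ _ => Finset.sum_congr rfl fun a _ => by ring

lemma alt_comp_perm {ι : Type*} {p : ℕ} (F : (Fin p → ι) → ℝ) (τ : Equiv.Perm (Fin p))
    (v : Fin p → ι) : alt (fun u => F (u ∘ τ)) v = esign τ * alt F v := by
  unfold alt
  show (Nat.factorial p : ℝ)⁻¹ * ∑ σ : Equiv.Perm (Fin p), esign σ * F ((v ∘ ⇑σ) ∘ ⇑τ)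
    = esign τ * ((Nat.factorial p : ℝ)⁻¹ * ∑ σ : Equiv.Perm (Fin p), esign σ * F (v ∘ ⇑σ))
  have key := Equiv.sum_comp (Equiv.mulRight τ) (fun π : Equiv.Perm (Fin p) => esign π * F (v ∘ π))
  simp only [Equiv.coe_mulRight] at key
  have step : ∀ σ : Equiv.Perm (Fin p),
      esign (σ * τ) * F (v ∘ ⇑(σ * τ)) = esign τ * (esign σ * F ((v ∘ ⇑σ) ∘ ⇑τ)) := by
    intro σ
    rw [esign_mul]
    have hc : v ∘ ⇑(σ * τ) = (v ∘ ⇑σ) ∘ ⇑τ := by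
      ext i; simp [Equiv.Perm.coe_mul, Function.comp]
    rw [hc]; ring
  simp only [step] at key
  rw [← Finset.mul_sum] at key
  have hS : ∑ σ : Equiv.Perm (Fin p), esign σ * F ((v ∘ ⇑σ) ∘ ⇑τ)
      = esign τ * ∑ σ : Equiv.Perm (Fin p), esign σ * F (v ∘ ⇑σ) := by
    calc ∑ σ : Equiv.Perm (Fin p), esign σ * F ((v ∘ ⇑σ) ∘ ⇑τ)
        = (esign τ * esign τ) * ∑ σ : Equiv.Perm (Fin p), esign σ * F ((v ∘ ⇑σ) ∘ ⇑τ) := by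
          rw [esign_sq, one_mul]
      _ = esign τ * (esign τ * ∑ σ : Equiv.Perm (Fin p), esign σ * F ((v ∘ ⇑σ) ∘ ⇑τ)) := by ring
      _ = esign τ * ∑ σ : Equiv.Perm (Fin p), esign σ * F (v ∘ ⇑σ) := by rw [key]
  rw [hS]; ring

lemma alt_eq_zero_of_symm {ι : Type*} {p : ℕ} (F : (Fin p → ι) → ℝ) (τ : Equiv.Perm (Fin p))
    (hτ : esign τ = -1) (hF : ∀ v, F (v ∘ τ) = F v) (w : Fin p → ι) : alt F w = 0 := by
  have h1 : alt (fun u => F (u ∘ τ)) w = alt F w := by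
    unfold alt
    congr 1
    apply Finset.sum_congr rfl
    intro σ _
    show esign σ * F ((w ∘ ⇑σ) ∘ ⇑τ) = esign σ * F (w ∘ ⇑σ)
    rw [hF]
  have h2 := alt_comp_perm F τ w
  rw [h1, hτ] at h2
  linarith


/-- If `H` is a closed conformal Killing–Yano tensor of order
`p = q+1` (`∇_a H_{b₁…b_p} = 2 g_{a[b₁} h_{b₂…b_p]}`, with `D a v = ∇_a H_v`) and `t`
is an affinely parameterized geodesic vector field (`t^a ∇_a t^b = 0`), then
`P̂_{b c₁…c_p} = t_{[b} H_{c₁…c_p]}` satisfies `t^a ∇_a P̂ = 0`.  Here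
`t_b = g_{bd} t^d` and `∇_a t_b = g_{bd} ∇_a t^d` (metric compatibility), so
`∇_a P̂` is the antisymmetrization of `(∇_a t_b) H_{c₁…c_p} + t_b ∇_a H_{c₁…c_p}`. -/
theorem statement5 {ι : Type*} [Fintype ι] {q : ℕ}
    (g : ι → ι → ℝ) (hgsymm : ∀ a b, g a b = g b a)
    (H : (Fin (q + 1) → ι) → ℝ) (hHalt : IsAlt H)
    (h : (Fin q → ι) → ℝ) (hhalt : IsAlt h)
    (D : ι → (Fin (q + 1) → ι) → ℝ) (hDalt : ∀ a, IsAlt (D a))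
    (hCCKY : ∀ (a : ι) (v : Fin (q + 1) → ι), D a v = 2 * ghAlt g h a v)
    (t : ι → ℝ) (Dt : ι → ι → ℝ) (hgeo : ∀ b, ∑ a, t a * Dt a b = 0) :
    ∀ w : Fin (q + 2) → ι,
      ∑ a, t a *
        alt (fun w' : Fin (q + 2) → ι =>
          (∑ d, g (w' 0) d * Dt a d) * H (fun i => w' i.succ)
            + (∑ d, g (w' 0) d * t d) * D a (fun i => w' i.succ)) w = 0 := by
  intro w
  rw [sum_mul_alt]
  have hfun : (fun v : Fin (q + 2) → ι =>
      ∑ a, t a * ((∑ d, g (v 0) d * Dt a d) * H (fun i => v i.succ)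
        + (∑ d, g (v 0) d * t d) * D a (fun i => v i.succ)))
      = fun v => ∑ σ : Equiv.Perm (Fin (q + 1)),
          (2 * (Nat.factorial (q + 1) : ℝ)⁻¹ * esign σ) *
            ((∑ d, g (v 0) d * t d) *
              ((∑ d, g (v ((σ 0).succ)) d * t d) * h (fun j => v ((σ j.succ).succ)))) := by
    funext v
    have hsplit : ∑ a, t a * ((∑ d, g (v 0) d * Dt a d) * H (fun i => v i.succ)
        + (∑ d, g (v 0) d * t d) * D a (fun i => v i.succ))
        = (∑ a, t a * ((∑ d, g (v 0) d * Dt a d) * H (fun i => v i.succ)))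
          + ∑ a, t a * ((∑ d, g (v 0) d * t d) * D a (fun i => v i.succ)) := by
      rw [← Finset.sum_add_distrib]
      exact Finset.sum_congr rfl fun a _ => by ring
    rw [hsplit]
    have hX : ∑ a, t a * ((∑ d, g (v 0) d * Dt a d) * H (fun i => v i.succ)) = 0 := by
      have e1 : ∀ a, t a * ((∑ d, g (v 0) d * Dt a d) * H (fun i => v i.succ))
          = ∑ d, (g (v 0) d * H (fun i => v i.succ)) * (t a * Dt a d) := by
        intro a
        rw [Finset.sum_mul, Finset.mul_sum]
        exact Finset.sum_congr rfl fun d _ => by ring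
      simp only [e1]
      rw [Finset.sum_comm]
      apply Finset.sum_eq_zero
      intro d _
      rw [← Finset.mul_sum, hgeo d, mul_zero]
    rw [hX, zero_add]
    have e2 : ∑ a, t a * ((∑ d, g (v 0) d * t d) * D a (fun i => v i.succ))
        = (∑ d, g (v 0) d * t d) * ∑ a, t a * D a (fun i => v i.succ) := by
      rw [Finset.mul_sum]
      exact Finset.sum_congr rfl fun a _ => by ring
    rw [e2]
    have hD : ∑ a, t a * D a (fun i => v i.succ)
        = ∑ σ : Equiv.Perm (Fin (q + 1)),
            (2 * (Nat.factorial (q + 1) : ℝ)⁻¹ * esign σ) *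
              ((∑ d, g (v ((σ 0).succ)) d * t d) * h (fun j => v ((σ j.succ).succ))) := by
      simp only [hCCKY, ghAlt]
      have e3 : ∑ a, t a * (2 * alt (fun u : Fin (q + 1) → ι => g a (u 0) * h fun i => u i.succ)
            (fun i => v i.succ))
          = ∑ a, (2 * t a) * alt (fun u : Fin (q + 1) → ι => g a (u 0) * h fun i => u i.succ)
            (fun i => v i.succ) :=
        Finset.sum_congr rfl fun a _ => by ring
      rw [e3, sum_mul_alt]
      have e4 : (fun u : Fin (q + 1) → ι => ∑ a, (2 * t a) * (g a (u 0) * h fun i => u i.succ))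
          = fun u => 2 * ((∑ d, g (u 0) d * t d) * h fun i => u i.succ) := by
        funext u
        calc ∑ a, (2 * t a) * (g a (u 0) * h fun i => u i.succ)
            = ∑ a, 2 * ((g (u 0) a * t a) * h fun i => u i.succ) :=
              Finset.sum_congr rfl fun a _ => by rw [hgsymm a (u 0)]; ring
          _ = 2 * ((∑ d, g (u 0) d * t d) * h fun i => u i.succ) := by
              rw [Finset.sum_mul, Finset.mul_sum]
      rw [e4]
      show (Nat.factorial (q + 1) : ℝ)⁻¹ * ∑ σ : Equiv.Perm (Fin (q + 1)),
          esign σ * (2 * ((∑ d, g (v ((σ 0).succ)) d * t d) * h (fun j => v ((σ j.succ).succ)))) = _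
      rw [Finset.mul_sum]
      exact Finset.sum_congr rfl fun σ _ => by ring
    rw [hD, Finset.mul_sum]
    exact Finset.sum_congr rfl fun σ _ => by ring
  rw [hfun]
  have key := (sum_mul_alt
      (fun σ : Equiv.Perm (Fin (q + 1)) => 2 * (Nat.factorial (q + 1) : ℝ)⁻¹ * esign σ)
      (fun σ (v : Fin (q + 2) → ι) =>
        (∑ d, g (v 0) d * t d) *
          ((∑ d, g (v ((σ 0).succ)) d * t d) * h (fun j => v ((σ j.succ).succ)))) w).symm
  rw [key]
  apply Finset.sum_eq_zero
  intro σ _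
  have hzero : alt (fun v : Fin (q + 2) → ι =>
      (∑ d, g (v 0) d * t d) *
        ((∑ d, g (v ((σ 0).succ)) d * t d) * h (fun j => v ((σ j.succ).succ)))) w = 0 := by
    apply alt_eq_zero_of_symm _ (Equiv.swap 0 ((σ 0).succ))
    · have hne : (0 : Fin (q + 2)) ≠ (σ 0).succ := (Fin.succ_ne_zero _).symm
      simp [esign, Equiv.Perm.sign_swap hne]
    · intro v
      show (∑ d, g (v (Equiv.swap 0 ((σ 0).succ) 0)) d * t d) *
          ((∑ d, g (v (Equiv.swap 0 ((σ 0).succ) ((σ 0).succ))) d * t d) *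
            h (fun j : Fin q => v (Equiv.swap 0 ((σ 0).succ) ((σ j.succ).succ)))) = _
      rw [Equiv.swap_apply_left, Equiv.swap_apply_right]
      have harg : (fun j : Fin q => v (Equiv.swap 0 ((σ 0).succ) ((σ j.succ).succ)))
          = fun j : Fin q => v ((σ j.succ).succ) := by
        funext j
        rw [Equiv.swap_apply_of_ne_of_ne (Fin.succ_ne_zero _)
          (by simp only [ne_eq, Fin.succ_inj]
              exact fun hc => Fin.succ_ne_zero j (σ.injective hc))]
      rw [harg]
      ring
  rw [hzero, mul_zero]
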